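/- Under the conditional independence and triangular structural model assumptions, the covariate-specific reduced-form decomposition holds almost surely: E{(A − μ0(Z,X))Y | Z, X} = δ0(X)·σ²(Z,X;μ0) + cov{g0(U,X), h0(U,X) | X} + Σ_{j∈{1,2}} m_{0j}(Z,X)·cov{g_j(U,X), h0(U,X) | X} + Σ_{k∈{0,1,2}} m_{1k}(Z,X)·cov{g_k(U,X), h1(U,X) | X}, where m_{01}(Z,X) = 1 − μ0(Z,X), m_{02}(Z,X) = Z, m_{11}(Z,X) = Z{1 − μ0(Z,X)}, and m_{10}(Z,X) = m_{12}(Z,X) = Z. -/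

import Mathlib

open MeasureTheory ProbabilityTheory

namespace Stmt3Aux

variable {Ω : Type*} {mΩ : MeasurableSpace Ω} {μ : MeasureTheory.Measure Ω}


lemma comap_comp_le {α β : Type*} [MeasurableSpace α] [MeasurableSpace β]
    (f : Ω → α) (g : α → β) (hg : Measurable g) :
    MeasurableSpace.comap (fun ω => g (f ω)) inferInstance
      ≤ MeasurableSpace.comap f inferInstance := by
  rw [show (fun ω => g (f ω)) = g ∘ f from rfl, ← MeasurableSpace.comap_comp]
  exact MeasurableSpace.comap_mono hg.comap_le

lemma condExp_zero_of_forall_setIntegral_zero {m : MeasurableSpace Ω}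
    [IsProbabilityMeasure μ] (hm : m ≤ mΩ) {f : Ω → ℝ} (hf : Integrable f μ)
    (h : ∀ s, MeasurableSet[m] s → ∫ ω in s, f ω ∂μ = 0) :
    μ[f | m] =ᵐ[μ] 0 := by
  haveI : SigmaFinite (μ.trim hm) := inferInstance
  refine (ae_eq_condExp_of_forall_setIntegral_eq (m := m) (μ := μ) hm (f := f) (g := fun _ => 0) hf
    (fun s _ _ => ?_) (fun s hs _ => ?_) ?_).symm
  · exact integrableOn_zero
  · simp [h s hs]
  · exact (@stronglyMeasurable_const Ω ℝ m _ 0).aestronglyMeasurable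

lemma setIntegral_zero_of_comap_pair
    {α γ : Type*} [MeasurableSpace α] [MeasurableSpace γ] [IsProbabilityMeasure μ]
    (P : Ω → α) (Q : Ω → γ) (hPm : Measurable P) (hQm : Measurable Q)
    {f : Ω → ℝ} (hf : Integrable f μ)
    (hrect : ∀ C D : _, MeasurableSet C → MeasurableSet D →
      ∫ ω in P ⁻¹' C ∩ Q ⁻¹' D, f ω ∂μ = 0) :
    ∀ s, MeasurableSet[MeasurableSpace.comap (fun ω => (P ω, Q ω)) inferInstance] s →
      ∫ ω in s, f ω ∂μ = 0 := by
  have hle : MeasurableSpace.comap (fun ω => (P ω, Q ω)) inferInstance ≤ mΩ :=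
    (hPm.prodMk hQm).comap_le
  have htot : ∫ ω, f ω ∂μ = 0 := by
    have := hrect Set.univ Set.univ MeasurableSet.univ MeasurableSet.univ
    simpa using this
  have hgen : MeasurableSpace.comap (fun ω => (P ω, Q ω)) inferInstance
      = MeasurableSpace.generateFrom
        (Set.preimage (fun ω => (P ω, Q ω)) ''
          Set.image2 (· ×ˢ ·) {s : Set α | MeasurableSet s} {t : Set γ | MeasurableSet t}) := by
    conv_lhs => rw [← generateFrom_prod]
    rw [MeasurableSpace.comap_generateFrom]
  have hpi : IsPiSystem (Set.preimage (fun ω => (P ω, Q ω)) ''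
      Set.image2 (· ×ˢ ·) {s : Set α | MeasurableSet s} {t : Set γ | MeasurableSet t}) :=
    isPiSystem_prod.comap _
  refine MeasurableSpace.induction_on_inter
    (m := MeasurableSpace.comap (fun ω => (P ω, Q ω)) inferInstance)
    (C := fun s _ => ∫ ω in s, f ω ∂μ = 0) hgen hpi (by simp) ?_ ?_ ?_
  · rintro t ⟨S, hS, rfl⟩
    obtain ⟨C, hC, D, hD, rfl⟩ := hS
    rw [Set.mk_preimage_prod]
    exact hrect C D hC hD
  · intro t ht hint
    have hmt : MeasurableSet t := hle t ht
    have h2 := integral_add_compl hmt hf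
    rw [hint] at h2
    linarith [h2, htot]
  · intro g hdisj hmeas hint
    rw [integral_iUnion (fun i => hle _ (hmeas i)) hdisj hf.integrableOn]
    simp [hint]

lemma indicator_mul_fun (s : Set Ω) (f : Ω → ℝ) :
    s.indicator f = fun ω => s.indicator (fun _ => (1:ℝ)) ω * f ω := by
  funext ω
  by_cases h : ω ∈ s <;> simp [h]

/-- Key lemma: under conditional independence of `Z` and `U` given `X`, the conditional
expectation of a `σ(U,X)`-measurable integrable function given `σ(Z,X)` equals its
conditional expectation given `σ(X)`. -/
lemma condExp_comap_pair_eq_condExp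
    {β 𝒰 𝒳 : Type*} [StandardBorelSpace Ω] [Nonempty Ω]
    [MeasurableSpace β] [MeasurableSpace 𝒰] [MeasurableSpace 𝒳]
    [IsProbabilityMeasure μ]
    {Z : Ω → β} {U : Ω → 𝒰} {X : Ω → 𝒳}
    (hZm : Measurable Z) (hUm : Measurable U) (hXm : Measurable X)
    (hXle : MeasurableSpace.comap X inferInstance ≤ mΩ)
    (hA9 : CondIndepFun (MeasurableSpace.comap X inferInstance) hXle Z U μ)
    {W : Ω → ℝ} (hWint : Integrable W μ)
    (hWmeas : StronglyMeasurable[MeasurableSpace.comap (fun ω => (U ω, X ω)) inferInstance] W) :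
    μ[W | MeasurableSpace.comap (fun ω => (Z ω, X ω)) inferInstance]
      =ᵐ[μ] μ[W | MeasurableSpace.comap X inferInstance] := by
  have hZXle : MeasurableSpace.comap (fun ω => (Z ω, X ω)) inferInstance ≤ mΩ :=
    (hZm.prodMk hXm).comap_le
  have hUXle : MeasurableSpace.comap (fun ω => (U ω, X ω)) inferInstance ≤ mΩ :=
    (hUm.prodMk hXm).comap_le
  have hXUX : MeasurableSpace.comap X inferInstance
      ≤ MeasurableSpace.comap (fun ω => (U ω, X ω)) inferInstance :=
    comap_comp_le (fun ω => (U ω, X ω)) Prod.snd measurable_snd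
  have hfact := (condIndepFun_iff_condExp_inter_preimage_eq_mul
    (hm' := hXle) (μ := μ) hZm hUm).mp hA9
  -- For each measurable C, let K be the indicator of Z⁻¹C and T its conditional expectation
  -- given σ(X). Then μ[K - T | σ(U,X)] = 0.
  have hKey : ∀ C : Set β, MeasurableSet C →
      ∀ W' : Ω → ℝ, Integrable W' μ →
      StronglyMeasurable[MeasurableSpace.comap (fun ω => (U ω, X ω)) inferInstance] W' →
      ∫ ω, (Z ⁻¹' C).indicator (fun _ => (1:ℝ)) ω * W' ω ∂μ
        = ∫ ω, (μ[(Z ⁻¹' C).indicator (fun _ => (1:ℝ)) | MeasurableSpace.comap X inferInstance]) ω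
            * W' ω ∂μ := by
    intro C hC W' hW'int hW'meas
    set K : Ω → ℝ := (Z ⁻¹' C).indicator (fun _ => (1:ℝ)) with hK
    set T : Ω → ℝ := μ[K | MeasurableSpace.comap X inferInstance] with hT
    have hKint : Integrable K μ := (integrable_const (1:ℝ)).indicator (hZm hC)
    have hTint : Integrable T μ := integrable_condExp
    have hT01 : ∀ᵐ ω ∂μ, ‖T ω‖ ≤ 1 := by
      have h0 : 0 ≤ᵐ[μ] T := condExp_nonneg (by
        filter_upwards with ω
        by_cases h : ω ∈ Z ⁻¹' C <;> simp [hK, h])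
      have h1 : T ≤ᵐ[μ] μ[(fun _ => (1:ℝ)) | MeasurableSpace.comap X inferInstance] :=
        condExp_mono hKint (integrable_const 1) (by
          filter_upwards with ω
          by_cases h : ω ∈ Z ⁻¹' C <;> simp [hK, h])
      rw [condExp_const hXle (1:ℝ)] at h1
      filter_upwards [h0, h1] with ω h0 h1
      simp only [Pi.zero_apply] at h0
      rw [Real.norm_eq_abs, abs_le]
      exact ⟨by linarith, h1⟩
    -- set integrals of K - T vanish on rectangles U⁻¹D ∩ X⁻¹B
    have hrect : ∀ D B : _, MeasurableSet D → MeasurableSet B →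
        ∫ ω in U ⁻¹' D ∩ X ⁻¹' B, (K ω - T ω) ∂μ = 0 := by
      intro D B hD hB
      have hsB : MeasurableSet[MeasurableSpace.comap X inferInstance] (X ⁻¹' B) := ⟨B, hB, rfl⟩
      have hsBΩ : MeasurableSet (X ⁻¹' B) := hXle _ hsB
      have hsD : MeasurableSet (U ⁻¹' D) := hUm hD
      have h1Dint : Integrable ((U ⁻¹' D).indicator (fun _ => (1:ℝ))) μ :=
        (integrable_const (1:ℝ)).indicator hsD
      have hI1 : ∫ ω in U ⁻¹' D ∩ X ⁻¹' B, K ω ∂μ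
          = ∫ ω in X ⁻¹' B,
              (μ⟦Z ⁻¹' C | MeasurableSpace.comap X inferInstance⟧) ω
              * (μ⟦U ⁻¹' D | MeasurableSpace.comap X inferInstance⟧) ω ∂μ := by
        rw [Set.inter_comm, ← setIntegral_indicator hsD]
        have : (U ⁻¹' D).indicator K = (Z ⁻¹' C ∩ U ⁻¹' D).indicator (fun _ => (1:ℝ)) := by
          rw [hK, Set.indicator_indicator, Set.inter_comm]
        rw [this]
        have hint : Integrable ((Z ⁻¹' C ∩ U ⁻¹' D).indicator (fun _ => (1:ℝ))) μ :=
          (integrable_const (1:ℝ)).indicator ((hZm hC).inter hsD)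
        rw [← setIntegral_condExp hXle hint hsB]
        exact setIntegral_congr_ae hsBΩ ((hfact C D hC hD).mono (fun ω h _ => h))
      have hI2 : ∫ ω in U ⁻¹' D ∩ X ⁻¹' B, T ω ∂μ
          = ∫ ω in X ⁻¹' B,
              (μ⟦Z ⁻¹' C | MeasurableSpace.comap X inferInstance⟧) ω
              * (μ⟦U ⁻¹' D | MeasurableSpace.comap X inferInstance⟧) ω ∂μ := by
        rw [Set.inter_comm, ← setIntegral_indicator hsD, indicator_mul_fun]
        have hTD : Integrable (fun ω => T ω * (U ⁻¹' D).indicator (fun _ => (1:ℝ)) ω) μ :=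
          Integrable.bdd_mul h1Dint (stronglyMeasurable_condExp.mono hXle).aestronglyMeasurable
            hT01
        have hmul : μ[(fun ω => T ω * (U ⁻¹' D).indicator (fun _ => (1:ℝ)) ω)
              | MeasurableSpace.comap X inferInstance]
            =ᵐ[μ] fun ω => T ω *
              (μ⟦U ⁻¹' D | MeasurableSpace.comap X inferInstance⟧) ω := by
          exact condExp_mul_of_aestronglyMeasurable_left stronglyMeasurable_condExp.aestronglyMeasurable
            hTD h1Dint
        have heq : (fun ω => (U ⁻¹' D).indicator (fun _ => (1:ℝ)) ω * T ω)
            = fun ω => T ω * (U ⁻¹' D).indicator (fun _ => (1:ℝ)) ω := by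
          funext ω; ring
        rw [heq, ← setIntegral_condExp hXle hTD hsB]
        exact setIntegral_congr_ae hsBΩ (hmul.mono (fun ω h _ => h))
      rw [integral_sub hKint.integrableOn hTint.integrableOn, hI1, hI2, sub_self]
    -- hence the conditional expectation of K - T given σ(U,X) vanishes
    have hzero : μ[(fun ω => K ω - T ω)
        | MeasurableSpace.comap (fun ω => (U ω, X ω)) inferInstance] =ᵐ[μ] 0 :=
      condExp_zero_of_forall_setIntegral_zero hUXle (hKint.sub hTint)
        (setIntegral_zero_of_comap_pair U X hUm hXm (hKint.sub hTint) hrect)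
    -- conclude by the pull-out property
    have hKW' : Integrable (fun ω => (K ω - T ω) * W' ω) μ := by
      refine Integrable.bdd_mul (c := 2) hW'int
        ((hKint.sub hTint).aestronglyMeasurable) ?_
      filter_upwards [hT01] with ω hTω
      have hKω : ‖K ω‖ ≤ 1 := by
        by_cases h : ω ∈ Z ⁻¹' C <;> simp [hK, h]
      calc ‖K ω - T ω‖ ≤ ‖K ω‖ + ‖T ω‖ := norm_sub_le _ _
        _ ≤ 2 := by linarith
    have hW'KT : Integrable (fun ω => W' ω * (K ω - T ω)) μ := by
      have : (fun ω => W' ω * (K ω - T ω)) = fun ω => (K ω - T ω) * W' ω := by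
        funext ω; ring
      rw [this]; exact hKW'
    have hpull : μ[(fun ω => W' ω * (K ω - T ω))
          | MeasurableSpace.comap (fun ω => (U ω, X ω)) inferInstance]
        =ᵐ[μ] fun ω => W' ω * (μ[(fun ω => K ω - T ω)
          | MeasurableSpace.comap (fun ω => (U ω, X ω)) inferInstance]) ω :=
      condExp_mul_of_stronglyMeasurable_left hW'meas hW'KT ((hKint.sub hTint))
    have hzz : ∫ ω, W' ω * (K ω - T ω) ∂μ = 0 := by
      have h1 : ∫ ω, W' ω * (K ω - T ω) ∂μ
          = ∫ ω, (μ[(fun ω => W' ω * (K ω - T ω))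
              | MeasurableSpace.comap (fun ω => (U ω, X ω)) inferInstance]) ω ∂μ :=
        (integral_condExp hUXle).symm
      rw [h1]
      have h2 : (μ[(fun ω => W' ω * (K ω - T ω))
            | MeasurableSpace.comap (fun ω => (U ω, X ω)) inferInstance])
          =ᵐ[μ] fun _ => (0:ℝ) := by
        filter_upwards [hpull, hzero] with ω hω h0
        rw [hω, h0]
        simp
      rw [integral_congr_ae h2, integral_zero]
    have hKbd' : ∀ᵐ ω ∂μ, ‖K ω‖ ≤ 1 := Filter.Eventually.of_forall fun ω => by
      by_cases h : ω ∈ Z ⁻¹' C <;> simp [hK, h]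
    have hKW : Integrable (fun ω => K ω * W' ω) μ :=
      Integrable.bdd_mul hW'int hKint.aestronglyMeasurable hKbd'
    have hTW : Integrable (fun ω => T ω * W' ω) μ :=
      Integrable.bdd_mul hW'int
        (stronglyMeasurable_condExp.mono hXle).aestronglyMeasurable hT01
    have hexp : ∫ ω, W' ω * (K ω - T ω) ∂μ
        = ∫ ω, K ω * W' ω ∂μ - ∫ ω, T ω * W' ω ∂μ := by
      rw [← integral_sub hKW hTW]
      congr 1; funext ω; ring
    rw [hexp] at hzz
    linarith
  -- now the main argument
  have hXZX : MeasurableSpace.comap X inferInstance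
      ≤ MeasurableSpace.comap (fun ω => (Z ω, X ω)) inferInstance :=
    comap_comp_le (fun ω => (Z ω, X ω)) Prod.snd measurable_snd
  set V : Ω → ℝ := μ[W | MeasurableSpace.comap X inferInstance] with hV
  have hVint : Integrable V μ := integrable_condExp
  have hrectZX : ∀ C B : _, MeasurableSet C → MeasurableSet B →
      ∫ ω in Z ⁻¹' C ∩ X ⁻¹' B, (W ω - V ω) ∂μ = 0 := by
    intro C B hC hB
    set K : Ω → ℝ := (Z ⁻¹' C).indicator (fun _ => (1:ℝ)) with hK
    set T : Ω → ℝ := μ[K | MeasurableSpace.comap X inferInstance] with hT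
    have hKint : Integrable K μ := (integrable_const (1:ℝ)).indicator (hZm hC)
    have hT01 : ∀ᵐ ω ∂μ, ‖T ω‖ ≤ 1 := by
      have h0 : 0 ≤ᵐ[μ] T := condExp_nonneg (by
        filter_upwards with ω
        by_cases h : ω ∈ Z ⁻¹' C <;> simp [hK, h])
      have h1 : T ≤ᵐ[μ] μ[(fun _ => (1:ℝ)) | MeasurableSpace.comap X inferInstance] :=
        condExp_mono hKint (integrable_const 1) (by
          filter_upwards with ω
          by_cases h : ω ∈ Z ⁻¹' C <;> simp [hK, h])
      rw [condExp_const hXle (1:ℝ)] at h1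
      filter_upwards [h0, h1] with ω h0 h1
      simp only [Pi.zero_apply] at h0
      rw [Real.norm_eq_abs, abs_le]
      exact ⟨by linarith, h1⟩
    have hsB : MeasurableSet[MeasurableSpace.comap X inferInstance] (X ⁻¹' B) := ⟨B, hB, rfl⟩
    have hsBΩ : MeasurableSet (X ⁻¹' B) := hXle _ hsB
    have hsC : MeasurableSet (Z ⁻¹' C) := hZm hC
    have hKbd : ∀ᵐ ω ∂μ, ‖K ω‖ ≤ 1 := Filter.Eventually.of_forall fun ω => by
      by_cases h : ω ∈ Z ⁻¹' C <;> simp [hK, h]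
    have hTW : Integrable (fun ω => T ω * W ω) μ :=
      Integrable.bdd_mul hWint
        (stronglyMeasurable_condExp.mono hXle).aestronglyMeasurable hT01
    have hVK : Integrable (fun ω => V ω * K ω) μ := by
      have : (fun ω => V ω * K ω) = fun ω => K ω * V ω := by funext ω; ring
      rw [this]
      exact Integrable.bdd_mul hVint hKint.aestronglyMeasurable hKbd
    -- ∫_s W
    have hWB : Integrable ((X ⁻¹' B).indicator W) μ := hWint.indicator hsBΩ
    have hWBmeas : StronglyMeasurable[MeasurableSpace.comap
        (fun ω => (U ω, X ω)) inferInstance] ((X ⁻¹' B).indicator W) :=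
      hWmeas.indicator (hXUX _ hsB)
    have hI1 : ∫ ω in Z ⁻¹' C ∩ X ⁻¹' B, W ω ∂μ
        = ∫ ω, T ω * (X ⁻¹' B).indicator W ω ∂μ := by
      rw [Set.inter_comm, ← setIntegral_indicator hsC, ← integral_indicator hsBΩ]
      have heq : (X ⁻¹' B).indicator ((Z ⁻¹' C).indicator W)
          = fun ω => K ω * (X ⁻¹' B).indicator W ω := by
        funext ω
        by_cases h1 : ω ∈ X ⁻¹' B <;> by_cases h2 : ω ∈ Z ⁻¹' C <;> simp [hK, h1, h2]
      rw [heq]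
      exact hKey C hC _ hWB hWBmeas
    have hI1' : ∫ ω, T ω * (X ⁻¹' B).indicator W ω ∂μ
        = ∫ ω in X ⁻¹' B, T ω * W ω ∂μ := by
      rw [← integral_indicator hsBΩ]
      congr 1
      funext ω
      by_cases h1 : ω ∈ X ⁻¹' B <;> simp [h1]
    -- ∫_s V
    have hI2 : ∫ ω in Z ⁻¹' C ∩ X ⁻¹' B, V ω ∂μ
        = ∫ ω in X ⁻¹' B, V ω * K ω ∂μ := by
      rw [Set.inter_comm, ← setIntegral_indicator hsC]
      congr 1
      funext ω
      by_cases h2 : ω ∈ Z ⁻¹' C <;> simp [hK, h2]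
    -- both equal the integral of V * T over X⁻¹B
    have hJ1 : ∫ ω in X ⁻¹' B, T ω * W ω ∂μ = ∫ ω in X ⁻¹' B, T ω * V ω ∂μ := by
      rw [← setIntegral_condExp hXle hTW hsB]
      refine setIntegral_congr_ae hsBΩ ?_
      have := condExp_mul_of_aestronglyMeasurable_left (f := T) (g := W)
        stronglyMeasurable_condExp.aestronglyMeasurable hTW hWint
      exact this.mono fun ω h _ => h
    have hJ2 : ∫ ω in X ⁻¹' B, V ω * K ω ∂μ = ∫ ω in X ⁻¹' B, V ω * T ω ∂μ := by
      rw [← setIntegral_condExp hXle hVK hsB]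
      refine setIntegral_congr_ae hsBΩ ?_
      have := condExp_mul_of_aestronglyMeasurable_left (f := V) (g := K)
        stronglyMeasurable_condExp.aestronglyMeasurable hVK hKint
      exact this.mono fun ω h _ => h
    have hcomm : ∫ ω in X ⁻¹' B, T ω * V ω ∂μ = ∫ ω in X ⁻¹' B, V ω * T ω ∂μ := by
      congr 1; funext ω; ring
    rw [integral_sub hWint.integrableOn hVint.integrableOn, hI1, hI1', hI2, hJ1, hJ2, hcomm,
      sub_self]
  have hall := setIntegral_zero_of_comap_pair Z X hZm hXm (hWint.sub hVint) hrectZX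
  haveI : SigmaFinite (μ.trim hZXle) := inferInstance
  refine (ae_eq_condExp_of_forall_setIntegral_eq
    (m := MeasurableSpace.comap (fun ω => (Z ω, X ω)) inferInstance) (μ := μ) hZXle (f := W) (g := V) hWint
    (fun s _ _ => hVint.integrableOn) (fun s hs _ => ?_)
    ((stronglyMeasurable_condExp.mono hXZX).aestronglyMeasurable)).symm
  have h1 := hall s hs
  simp only [Pi.sub_apply] at h1
  have h2 : ∫ ω in s, (W ω - V ω) ∂μ
      = ∫ ω in s, W ω ∂μ - ∫ ω in s, V ω ∂μ :=
    integral_sub hWint.integrableOn hVint.integrableOn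
  rw [h2] at h1
  linarith

lemma int_mul_L2 {f g : Ω → ℝ} (hf : MemLp f 2 μ) (hg : MemLp g 2 μ) :
    Integrable (fun ω => f ω * g ω) μ := by
  refine Integrable.mono' ((hf.integrable_sq.add hg.integrable_sq).div_const 2)
    (hf.aestronglyMeasurable.mul hg.aestronglyMeasurable) ?_
  filter_upwards with x
  simp only [Pi.add_apply]
  have h := sq_nonneg (|f x| - |g x|)
  rw [Real.norm_eq_abs, abs_mul]
  have h1 : |f x| ^ 2 = f x ^ 2 := sq_abs _
  have h2 : |g x| ^ 2 = g x ^ 2 := sq_abs _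
  nlinarith [abs_nonneg (f x), abs_nonneg (g x)]

lemma int_mul_bdd {f g : Ω → ℝ} {c : ℝ} (hf : Integrable f μ)
    (hg : AEStronglyMeasurable g μ) (hgb : ∀ᵐ ω ∂μ, ‖g ω‖ ≤ c) :
    Integrable (fun ω => f ω * g ω) μ := by
  have h := Integrable.bdd_mul hf hg hgb
  exact h.congr (Filter.Eventually.of_forall fun ω => by ring)

end Stmt3Aux

/-- Under conditional independence (A9) and the triangular structural models
(A10), the covariate-specific reduced-form decomposition holds almost surely:
`E{(A − μ0(Z,X))Y | Z, X} = δ0(X)σ²(Z,X;μ0) + cov{g0,h0|X} + Σ_j m_{0j}(Z,X)·cov{g_j,h0|X}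
  + Σ_k m_{1k}(Z,X)·cov{g_k,h1|X}`,
with `m_{01} = 1−μ0(Z,X)`, `m_{02} = Z`, `m_{11} = Z(1−μ0(Z,X))`, `m_{10} = m_{12} = Z`. -/
theorem stmt3
    {Ω 𝒳 𝒰 : Type*} [mΩ : MeasurableSpace Ω] [StandardBorelSpace Ω] [Nonempty Ω]
    [MeasurableSpace 𝒳] [MeasurableSpace 𝒰]
    (μ : Measure Ω) [IsProbabilityMeasure μ]
    (Y A Z : Ω → ℝ) (X : Ω → 𝒳) (U : Ω → 𝒰)
    (hYm : Measurable Y) (hAm : Measurable A) (hZm : Measurable Z)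
    (hXm : Measurable X) (hUm : Measurable U)
    (hAbin : ∀ ω, A ω = 0 ∨ A ω = 1) (hZbin : ∀ ω, Z ω = 0 ∨ Z ω = 1)
    (hYint : Integrable Y μ)
    -- structural functions
    (g0 g1 g2 h0 h1 : 𝒰 × 𝒳 → ℝ)
    (hg0 : Measurable g0) (hg1 : Measurable g1) (hg2 : Measurable g2)
    (hh0 : Measurable h0) (hh1 : Measurable h1)
    (hg0L2 : MemLp (fun ω => g0 (U ω, X ω)) 2 μ) (hg1L2 : MemLp (fun ω => g1 (U ω, X ω)) 2 μ)
    (hg2L2 : MemLp (fun ω => g2 (U ω, X ω)) 2 μ) (hh0L2 : MemLp (fun ω => h0 (U ω, X ω)) 2 μ)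
    (hh1L2 : MemLp (fun ω => h1 (U ω, X ω)) 2 μ)
    -- (A9) conditional independence: Z ⫫ U | X
    (hXle : MeasurableSpace.comap X inferInstance ≤ mΩ)
    (hA9 : CondIndepFun (MeasurableSpace.comap X inferInstance) hXle Z U μ)
    -- (A10) triangular structural models
    (hA10Y :
      μ[Y | MeasurableSpace.comap (fun ω => (A ω, Z ω, U ω, X ω)) inferInstance]
        =ᵐ[μ] fun ω => g0 (U ω, X ω) + g1 (U ω, X ω) * A ω + g2 (U ω, X ω) * Z ω)
    (hA10A :
      μ[A | MeasurableSpace.comap (fun ω => (Z ω, U ω, X ω)) inferInstance]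
        =ᵐ[μ] fun ω => h0 (U ω, X ω) + h1 (U ω, X ω) * Z ω)
    -- propensity score μ0(z,x) = P(A=1|Z=z,X=x)
    (μ0 : ℝ × 𝒳 → ℝ) (hμ0m : Measurable μ0)
    (hμ0 : μ[A | MeasurableSpace.comap (fun ω => (Z ω, X ω)) inferInstance]
      =ᵐ[μ] fun ω => μ0 (Z ω, X ω))
    -- conditional average treatment effect δ0(x) = E{g1(U,X)|X=x}
    (δ0 : 𝒳 → ℝ) (hδ0m : Measurable δ0)
    (hδ0 : μ[fun ω => g1 (U ω, X ω) | MeasurableSpace.comap X inferInstance]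
      =ᵐ[μ] fun ω => δ0 (X ω))
    -- conditional covariance functions c_{jk}(x) = cov{g_j(U,X), h_k(U,X) | X=x}
    (c00 c10 c20 c01 c11 c21 : 𝒳 → ℝ)
    (hc00m : Measurable c00) (hc10m : Measurable c10) (hc20m : Measurable c20)
    (hc01m : Measurable c01) (hc11m : Measurable c11) (hc21m : Measurable c21)
    (hc00 : (fun ω => c00 (X ω)) =ᵐ[μ] fun ω =>
      (μ[fun ω => g0 (U ω, X ω) * h0 (U ω, X ω) | MeasurableSpace.comap X inferInstance]) ω
      - (μ[fun ω => g0 (U ω, X ω) | MeasurableSpace.comap X inferInstance]) ω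
        * (μ[fun ω => h0 (U ω, X ω) | MeasurableSpace.comap X inferInstance]) ω)
    (hc10 : (fun ω => c10 (X ω)) =ᵐ[μ] fun ω =>
      (μ[fun ω => g1 (U ω, X ω) * h0 (U ω, X ω) | MeasurableSpace.comap X inferInstance]) ω
      - (μ[fun ω => g1 (U ω, X ω) | MeasurableSpace.comap X inferInstance]) ω
        * (μ[fun ω => h0 (U ω, X ω) | MeasurableSpace.comap X inferInstance]) ω)
    (hc20 : (fun ω => c20 (X ω)) =ᵐ[μ] fun ω =>
      (μ[fun ω => g2 (U ω, X ω) * h0 (U ω, X ω) | MeasurableSpace.comap X inferInstance]) ω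
      - (μ[fun ω => g2 (U ω, X ω) | MeasurableSpace.comap X inferInstance]) ω
        * (μ[fun ω => h0 (U ω, X ω) | MeasurableSpace.comap X inferInstance]) ω)
    (hc01 : (fun ω => c01 (X ω)) =ᵐ[μ] fun ω =>
      (μ[fun ω => g0 (U ω, X ω) * h1 (U ω, X ω) | MeasurableSpace.comap X inferInstance]) ω
      - (μ[fun ω => g0 (U ω, X ω) | MeasurableSpace.comap X inferInstance]) ω
        * (μ[fun ω => h1 (U ω, X ω) | MeasurableSpace.comap X inferInstance]) ω)
    (hc11 : (fun ω => c11 (X ω)) =ᵐ[μ] fun ω =>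
      (μ[fun ω => g1 (U ω, X ω) * h1 (U ω, X ω) | MeasurableSpace.comap X inferInstance]) ω
      - (μ[fun ω => g1 (U ω, X ω) | MeasurableSpace.comap X inferInstance]) ω
        * (μ[fun ω => h1 (U ω, X ω) | MeasurableSpace.comap X inferInstance]) ω)
    (hc21 : (fun ω => c21 (X ω)) =ᵐ[μ] fun ω =>
      (μ[fun ω => g2 (U ω, X ω) * h1 (U ω, X ω) | MeasurableSpace.comap X inferInstance]) ω
      - (μ[fun ω => g2 (U ω, X ω) | MeasurableSpace.comap X inferInstance]) ω
        * (μ[fun ω => h1 (U ω, X ω) | MeasurableSpace.comap X inferInstance]) ω)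
    -- integrability of the reduced-form left-hand side
    (hwint : Integrable (fun ω => (A ω - μ0 (Z ω, X ω)) * Y ω) μ) :
    -- conclusion : the reduced-form decomposition, almost surely
    μ[fun ω => (A ω - μ0 (Z ω, X ω)) * Y ω |
        MeasurableSpace.comap (fun ω => (Z ω, X ω)) inferInstance]
      =ᵐ[μ] fun ω =>
        δ0 (X ω) * (μ0 (Z ω, X ω) * (1 - μ0 (Z ω, X ω)))
        + c00 (X ω)
        + ((1 - μ0 (Z ω, X ω)) * c10 (X ω) + Z ω * c20 (X ω))
        + (Z ω * c01 (X ω) + Z ω * (1 - μ0 (Z ω, X ω)) * c11 (X ω) + Z ω * c21 (X ω)) := by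
  -- basic boundedness and integrability facts
  have hone : Integrable (fun _ : Ω => (1:ℝ)) μ := integrable_const 1
  have hAbd : ∀ᵐ ω ∂μ, ‖A ω‖ ≤ 1 := Filter.Eventually.of_forall fun ω => by
    rcases hAbin ω with h | h <;> simp [h]
  have hZbd : ∀ᵐ ω ∂μ, ‖Z ω‖ ≤ 1 := Filter.Eventually.of_forall fun ω => by
    rcases hZbin ω with h | h <;> simp [h]
  have hAint : Integrable A μ := by
    have h := Integrable.bdd_mul (c := 1) hone hAm.aestronglyMeasurable hAbd
    simpa using h
  have hZint : Integrable Z μ := by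
    have h := Integrable.bdd_mul (c := 1) hone hZm.aestronglyMeasurable hZbd
    simpa using h
  -- σ-algebra inclusions
  have hZXle : (MeasurableSpace.comap (fun ω => (Z ω, X ω)) inferInstance) ≤ mΩ := (hZm.prodMk hXm).comap_le
  have hUXle : (MeasurableSpace.comap (fun ω => (U ω, X ω)) inferInstance) ≤ mΩ := (hUm.prodMk hXm).comap_le
  have hZUXle : (MeasurableSpace.comap (fun ω => (Z ω, U ω, X ω)) inferInstance) ≤ mΩ := (hZm.prodMk (hUm.prodMk hXm)).comap_le
  have hAZUXle : (MeasurableSpace.comap (fun ω => (A ω, Z ω, U ω, X ω)) inferInstance) ≤ mΩ := (hAm.prodMk (hZm.prodMk (hUm.prodMk hXm))).comap_le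
  have hXZX : (MeasurableSpace.comap X inferInstance) ≤ (MeasurableSpace.comap (fun ω => (Z ω, X ω)) inferInstance) :=
    Stmt3Aux.comap_comp_le (fun ω => (Z ω, X ω)) Prod.snd measurable_snd
  have hZXZUX : (MeasurableSpace.comap (fun ω => (Z ω, X ω)) inferInstance) ≤ (MeasurableSpace.comap (fun ω => (Z ω, U ω, X ω)) inferInstance) :=
    Stmt3Aux.comap_comp_le (fun ω => (Z ω, U ω, X ω)) (fun p => (p.1, p.2.2))
      (measurable_fst.prodMk (measurable_snd.comp measurable_snd))
  have hZXAZUX : (MeasurableSpace.comap (fun ω => (Z ω, X ω)) inferInstance) ≤ (MeasurableSpace.comap (fun ω => (A ω, Z ω, U ω, X ω)) inferInstance) :=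
    Stmt3Aux.comap_comp_le (fun ω => (A ω, Z ω, U ω, X ω)) (fun p => (p.2.1, p.2.2.2))
      ((measurable_fst.comp measurable_snd).prodMk
        (measurable_snd.comp (measurable_snd.comp measurable_snd)))
  -- projections measurable w.r.t. the comap σ-algebras
  have hpairZX : Measurable[(MeasurableSpace.comap (fun ω => (Z ω, X ω)) inferInstance)] (fun ω => (Z ω, X ω)) := Measurable.of_comap_le le_rfl
  have hpairUX : Measurable[(MeasurableSpace.comap (fun ω => (U ω, X ω)) inferInstance)] (fun ω => (U ω, X ω)) := Measurable.of_comap_le le_rfl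
  have hpairZUX : Measurable[(MeasurableSpace.comap (fun ω => (Z ω, U ω, X ω)) inferInstance)] (fun ω => (Z ω, U ω, X ω)) := Measurable.of_comap_le le_rfl
  have hpairA : Measurable[(MeasurableSpace.comap (fun ω => (A ω, Z ω, U ω, X ω)) inferInstance)] (fun ω => (A ω, Z ω, U ω, X ω)) := Measurable.of_comap_le le_rfl
  -- the truncated propensity score
  have hνm : Measurable (fun p : ℝ × 𝒳 => max 0 (min 1 (μ0 p))) :=
    measurable_const.max (measurable_const.min hμ0m)
  set N : Ω → ℝ := fun ω => max 0 (min 1 (μ0 (Z ω, X ω))) with hNdef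
  have hN0 : ∀ ω, 0 ≤ N ω := fun ω => le_max_left _ _
  have hN1 : ∀ ω, N ω ≤ 1 := fun ω => max_le (by norm_num) (min_le_left _ _)
  have hNbd : ∀ᵐ ω ∂μ, ‖N ω‖ ≤ 1 := Filter.Eventually.of_forall fun ω => by
    rw [Real.norm_eq_abs, abs_le]; exact ⟨by linarith [hN0 ω], hN1 ω⟩
  have hNmΩ : Measurable N := hνm.comp (hZm.prodMk hXm)
  have hNaesm : AEStronglyMeasurable N μ := hNmΩ.aestronglyMeasurable
  have hNm : Measurable[(MeasurableSpace.comap (fun ω => (Z ω, X ω)) inferInstance)] N := hνm.comp hpairZX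
  have hNμ0 : (fun ω => μ0 (Z ω, X ω)) =ᵐ[μ] N := by
    have h0 : (0 : Ω → ℝ) ≤ᵐ[μ] μ[A | (MeasurableSpace.comap (fun ω => (Z ω, X ω)) inferInstance)] := condExp_nonneg
      (Filter.Eventually.of_forall fun ω => by rcases hAbin ω with h | h <;> simp [h])
    have h1 : μ[A | (MeasurableSpace.comap (fun ω => (Z ω, X ω)) inferInstance)] ≤ᵐ[μ] μ[(fun _ : Ω => (1:ℝ)) | (MeasurableSpace.comap (fun ω => (Z ω, X ω)) inferInstance)] := condExp_mono hAint hone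
      (Filter.Eventually.of_forall fun ω => by rcases hAbin ω with h | h <;> simp [h])
    rw [condExp_const hZXle (1:ℝ)] at h1
    filter_upwards [hμ0, h0, h1] with ω hω h0 h1
    simp only [Pi.zero_apply] at h0
    show μ0 (Z ω, X ω) = max 0 (min 1 (μ0 (Z ω, X ω)))
    rw [hω] at h0 h1
    rw [min_eq_right h1, max_eq_right h0]
  -- integrability of the structural functions and their products
  have hG0int : Integrable (fun ω => g0 (U ω, X ω)) μ := hg0L2.integrable one_le_two
  have hG1int : Integrable (fun ω => g1 (U ω, X ω)) μ := hg1L2.integrable one_le_two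
  have hG2int : Integrable (fun ω => g2 (U ω, X ω)) μ := hg2L2.integrable one_le_two
  have hH0int : Integrable (fun ω => h0 (U ω, X ω)) μ := hh0L2.integrable one_le_two
  have hH1int : Integrable (fun ω => h1 (U ω, X ω)) μ := hh1L2.integrable one_le_two
  have hP00int : Integrable (fun ω => g0 (U ω, X ω) * h0 (U ω, X ω)) μ := Stmt3Aux.int_mul_L2 hg0L2 hh0L2
  have hP01int : Integrable (fun ω => g0 (U ω, X ω) * h1 (U ω, X ω)) μ := Stmt3Aux.int_mul_L2 hg0L2 hh1L2
  have hP10int : Integrable (fun ω => g1 (U ω, X ω) * h0 (U ω, X ω)) μ := Stmt3Aux.int_mul_L2 hg1L2 hh0L2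
  have hP11int : Integrable (fun ω => g1 (U ω, X ω) * h1 (U ω, X ω)) μ := Stmt3Aux.int_mul_L2 hg1L2 hh1L2
  have hP20int : Integrable (fun ω => g2 (U ω, X ω) * h0 (U ω, X ω)) μ := Stmt3Aux.int_mul_L2 hg2L2 hh0L2
  have hP21int : Integrable (fun ω => g2 (U ω, X ω) * h1 (U ω, X ω)) μ := Stmt3Aux.int_mul_L2 hg2L2 hh1L2
  -- strong measurability w.r.t. σ(U,X)
  have hΦg0 : StronglyMeasurable[(MeasurableSpace.comap (fun ω => (U ω, X ω)) inferInstance)] (fun ω => g0 (U ω, X ω)) :=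
    (hg0.comp hpairUX).stronglyMeasurable
  have hΦg1 : StronglyMeasurable[(MeasurableSpace.comap (fun ω => (U ω, X ω)) inferInstance)] (fun ω => g1 (U ω, X ω)) :=
    (hg1.comp hpairUX).stronglyMeasurable
  have hΦg2 : StronglyMeasurable[(MeasurableSpace.comap (fun ω => (U ω, X ω)) inferInstance)] (fun ω => g2 (U ω, X ω)) :=
    (hg2.comp hpairUX).stronglyMeasurable
  have hΦh0 : StronglyMeasurable[(MeasurableSpace.comap (fun ω => (U ω, X ω)) inferInstance)] (fun ω => h0 (U ω, X ω)) :=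
    (hh0.comp hpairUX).stronglyMeasurable
  have hΦh1 : StronglyMeasurable[(MeasurableSpace.comap (fun ω => (U ω, X ω)) inferInstance)] (fun ω => h1 (U ω, X ω)) :=
    (hh1.comp hpairUX).stronglyMeasurable
  have hΦ00 : StronglyMeasurable[(MeasurableSpace.comap (fun ω => (U ω, X ω)) inferInstance)] (fun ω => g0 (U ω, X ω) * h0 (U ω, X ω)) :=
    ((hg0.comp hpairUX).mul (hh0.comp hpairUX)).stronglyMeasurable
  have hΦ01 : StronglyMeasurable[(MeasurableSpace.comap (fun ω => (U ω, X ω)) inferInstance)] (fun ω => g0 (U ω, X ω) * h1 (U ω, X ω)) :=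
    ((hg0.comp hpairUX).mul (hh1.comp hpairUX)).stronglyMeasurable
  have hΦ10 : StronglyMeasurable[(MeasurableSpace.comap (fun ω => (U ω, X ω)) inferInstance)] (fun ω => g1 (U ω, X ω) * h0 (U ω, X ω)) :=
    ((hg1.comp hpairUX).mul (hh0.comp hpairUX)).stronglyMeasurable
  have hΦ11 : StronglyMeasurable[(MeasurableSpace.comap (fun ω => (U ω, X ω)) inferInstance)] (fun ω => g1 (U ω, X ω) * h1 (U ω, X ω)) :=
    ((hg1.comp hpairUX).mul (hh1.comp hpairUX)).stronglyMeasurable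
  have hΦ20 : StronglyMeasurable[(MeasurableSpace.comap (fun ω => (U ω, X ω)) inferInstance)] (fun ω => g2 (U ω, X ω) * h0 (U ω, X ω)) :=
    ((hg2.comp hpairUX).mul (hh0.comp hpairUX)).stronglyMeasurable
  have hΦ21 : StronglyMeasurable[(MeasurableSpace.comap (fun ω => (U ω, X ω)) inferInstance)] (fun ω => g2 (U ω, X ω) * h1 (U ω, X ω)) :=
    ((hg2.comp hpairUX).mul (hh1.comp hpairUX)).stronglyMeasurable
  -- the per-term reduction: pull out a bounded σ(Z,X)-measurable factor and replace
  -- conditioning on σ(Z,X) by conditioning on σ(X)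
  have hkey : ∀ Φ : Ω → ℝ, Integrable Φ μ → StronglyMeasurable[(MeasurableSpace.comap (fun ω => (U ω, X ω)) inferInstance)] Φ →
      μ[Φ | (MeasurableSpace.comap (fun ω => (Z ω, X ω)) inferInstance)] =ᵐ[μ] μ[Φ | (MeasurableSpace.comap X inferInstance)] := fun Φ hΦ hΦm =>
    Stmt3Aux.condExp_comap_pair_eq_condExp hZm hUm hXm hXle hA9 hΦ hΦm
  have hterm : ∀ ψ : Ω → ℝ, StronglyMeasurable[(MeasurableSpace.comap (fun ω => (Z ω, X ω)) inferInstance)] ψ → (∀ᵐ ω ∂μ, ‖ψ ω‖ ≤ 1) →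
      ∀ Φ : Ω → ℝ, Integrable Φ μ → StronglyMeasurable[(MeasurableSpace.comap (fun ω => (U ω, X ω)) inferInstance)] Φ →
      μ[(fun ω => ψ ω * Φ ω) | (MeasurableSpace.comap (fun ω => (Z ω, X ω)) inferInstance)] =ᵐ[μ] fun ω => ψ ω * (μ[Φ | (MeasurableSpace.comap X inferInstance)]) ω := by
    intro ψ hψ hψb Φ hΦ hΦm
    have hψaesm : AEStronglyMeasurable ψ μ := (hψ.mono hZXle).aestronglyMeasurable
    have hint : Integrable (fun ω => ψ ω * Φ ω) μ := Integrable.bdd_mul (c := 1) hΦ hψaesm hψb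
    have h1 : μ[(fun ω => ψ ω * Φ ω) | (MeasurableSpace.comap (fun ω => (Z ω, X ω)) inferInstance)] =ᵐ[μ] fun ω => ψ ω * (μ[Φ | (MeasurableSpace.comap (fun ω => (Z ω, X ω)) inferInstance)]) ω :=
      condExp_mul_of_stronglyMeasurable_left hψ hint hΦ
    refine h1.trans ?_
    filter_upwards [hkey Φ hΦ hΦm] with ω h2
    rw [h2]
  -- bounded σ(Z,X)-measurable multipliers
  have hZsm : StronglyMeasurable[(MeasurableSpace.comap (fun ω => (Z ω, X ω)) inferInstance)] Z := (measurable_fst.comp hpairZX).stronglyMeasurable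
  have hNsm : StronglyMeasurable[(MeasurableSpace.comap (fun ω => (Z ω, X ω)) inferInstance)] N := hNm.stronglyMeasurable
  have h1Nsm : StronglyMeasurable[(MeasurableSpace.comap (fun ω => (Z ω, X ω)) inferInstance)] (fun ω => 1 - N ω) :=
    (measurable_const.sub hNm).stronglyMeasurable
  have hZ1Nsm : StronglyMeasurable[(MeasurableSpace.comap (fun ω => (Z ω, X ω)) inferInstance)] (fun ω => Z ω * (1 - N ω)) :=
    ((measurable_fst.comp hpairZX).mul (measurable_const.sub hNm)).stronglyMeasurable
  have hNZsm : StronglyMeasurable[(MeasurableSpace.comap (fun ω => (Z ω, X ω)) inferInstance)] (fun ω => N ω * Z ω) :=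
    (hNm.mul (measurable_fst.comp hpairZX)).stronglyMeasurable
  have h1Nbd : ∀ᵐ ω ∂μ, ‖(1 : ℝ) - N ω‖ ≤ 1 := Filter.Eventually.of_forall fun ω => by
    rw [Real.norm_eq_abs, abs_le]; exact ⟨by linarith [hN1 ω], by linarith [hN0 ω]⟩
  have hZ1Nbd : ∀ᵐ ω ∂μ, ‖Z ω * (1 - N ω)‖ ≤ 1 := Filter.Eventually.of_forall fun ω => by
    rcases hZbin ω with h | h <;> rw [h, Real.norm_eq_abs, abs_le] <;>
      exact ⟨by nlinarith [hN0 ω, hN1 ω], by nlinarith [hN0 ω, hN1 ω]⟩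
  have hNZbd : ∀ᵐ ω ∂μ, ‖N ω * Z ω‖ ≤ 1 := Filter.Eventually.of_forall fun ω => by
    rcases hZbin ω with h | h <;> rw [h, Real.norm_eq_abs, abs_le] <;>
      exact ⟨by nlinarith [hN0 ω, hN1 ω], by nlinarith [hN0 ω, hN1 ω]⟩
  have h1Naesm : AEStronglyMeasurable (fun ω => (1:ℝ) - N ω) μ :=
    (measurable_const.sub hNmΩ).aestronglyMeasurable
  have hZ1Naesm : AEStronglyMeasurable (fun ω => Z ω * (1 - N ω)) μ :=
    (hZm.mul (measurable_const.sub hNmΩ)).aestronglyMeasurable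
  have hNZaesm : AEStronglyMeasurable (fun ω => N ω * Z ω) μ :=
    (hNmΩ.mul hZm).aestronglyMeasurable
  -- integrability of the eight terms
  have ht1 : Integrable (fun ω => g0 (U ω, X ω) * h0 (U ω, X ω)) μ := hP00int
  have ht2 : Integrable (fun ω => Z ω * (g0 (U ω, X ω) * h1 (U ω, X ω))) μ :=
    Integrable.bdd_mul (c := 1) hP01int hZm.aestronglyMeasurable hZbd
  have ht3 : Integrable (fun ω => (1 - N ω) * (g1 (U ω, X ω) * h0 (U ω, X ω))) μ :=
    Integrable.bdd_mul (c := 1) hP10int h1Naesm h1Nbd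
  have ht4 : Integrable (fun ω => (Z ω * (1 - N ω)) * (g1 (U ω, X ω) * h1 (U ω, X ω))) μ :=
    Integrable.bdd_mul (c := 1) hP11int hZ1Naesm hZ1Nbd
  have ht5 : Integrable (fun ω => Z ω * (g2 (U ω, X ω) * h0 (U ω, X ω))) μ :=
    Integrable.bdd_mul (c := 1) hP20int hZm.aestronglyMeasurable hZbd
  have ht6 : Integrable (fun ω => Z ω * (g2 (U ω, X ω) * h1 (U ω, X ω))) μ :=
    Integrable.bdd_mul (c := 1) hP21int hZm.aestronglyMeasurable hZbd
  have ht7 : Integrable (fun ω => N ω * g0 (U ω, X ω)) μ :=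
    Integrable.bdd_mul (c := 1) hG0int hNaesm hNbd
  have ht8 : Integrable (fun ω => (N ω * Z ω) * g2 (U ω, X ω)) μ :=
    Integrable.bdd_mul (c := 1) hG2int hNZaesm hNZbd
  have hs2 : Integrable (fun ω => g0 (U ω, X ω) * h0 (U ω, X ω) + Z ω * (g0 (U ω, X ω) * h1 (U ω, X ω))) μ := ht1.add ht2
  have hs3 : Integrable (fun ω => g0 (U ω, X ω) * h0 (U ω, X ω) + Z ω * (g0 (U ω, X ω) * h1 (U ω, X ω)) + (1 - N ω) * (g1 (U ω, X ω) * h0 (U ω, X ω))) μ := hs2.add ht3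
  have hs4 : Integrable (fun ω => g0 (U ω, X ω) * h0 (U ω, X ω) + Z ω * (g0 (U ω, X ω) * h1 (U ω, X ω)) + (1 - N ω) * (g1 (U ω, X ω) * h0 (U ω, X ω)) + (Z ω * (1 - N ω)) * (g1 (U ω, X ω) * h1 (U ω, X ω))) μ := hs3.add ht4
  have hs5 : Integrable (fun ω => g0 (U ω, X ω) * h0 (U ω, X ω) + Z ω * (g0 (U ω, X ω) * h1 (U ω, X ω)) + (1 - N ω) * (g1 (U ω, X ω) * h0 (U ω, X ω)) + (Z ω * (1 - N ω)) * (g1 (U ω, X ω) * h1 (U ω, X ω)) + Z ω * (g2 (U ω, X ω) * h0 (U ω, X ω))) μ := hs4.add ht5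
  have hs6 : Integrable (fun ω => g0 (U ω, X ω) * h0 (U ω, X ω) + Z ω * (g0 (U ω, X ω) * h1 (U ω, X ω)) + (1 - N ω) * (g1 (U ω, X ω) * h0 (U ω, X ω)) + (Z ω * (1 - N ω)) * (g1 (U ω, X ω) * h1 (U ω, X ω)) + Z ω * (g2 (U ω, X ω) * h0 (U ω, X ω)) + Z ω * (g2 (U ω, X ω) * h1 (U ω, X ω))) μ := hs5.add ht6
  have hs7 : Integrable (fun ω => g0 (U ω, X ω) * h0 (U ω, X ω) + Z ω * (g0 (U ω, X ω) * h1 (U ω, X ω)) + (1 - N ω) * (g1 (U ω, X ω) * h0 (U ω, X ω)) + (Z ω * (1 - N ω)) * (g1 (U ω, X ω) * h1 (U ω, X ω)) + Z ω * (g2 (U ω, X ω) * h0 (U ω, X ω)) + Z ω * (g2 (U ω, X ω) * h1 (U ω, X ω)) - N ω * g0 (U ω, X ω)) μ := hs6.sub ht7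
  have hs8 : Integrable (fun ω => g0 (U ω, X ω) * h0 (U ω, X ω) + Z ω * (g0 (U ω, X ω) * h1 (U ω, X ω)) + (1 - N ω) * (g1 (U ω, X ω) * h0 (U ω, X ω)) + (Z ω * (1 - N ω)) * (g1 (U ω, X ω) * h1 (U ω, X ω)) + Z ω * (g2 (U ω, X ω) * h0 (U ω, X ω)) + Z ω * (g2 (U ω, X ω) * h1 (U ω, X ω)) - N ω * g0 (U ω, X ω) - (N ω * Z ω) * g2 (U ω, X ω)) μ := hs7.sub ht8
  -- conditional expectations of the eight terms
  have hT1 : μ[(fun ω => g0 (U ω, X ω) * h0 (U ω, X ω)) | (MeasurableSpace.comap (fun ω => (Z ω, X ω)) inferInstance)] =ᵐ[μ] fun ω => (μ[(fun ω => g0 (U ω, X ω) * h0 (U ω, X ω)) | (MeasurableSpace.comap X inferInstance)]) ω :=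
    hkey _ hP00int hΦ00
  have hT2 : μ[(fun ω => Z ω * (g0 (U ω, X ω) * h1 (U ω, X ω))) | (MeasurableSpace.comap (fun ω => (Z ω, X ω)) inferInstance)] =ᵐ[μ] fun ω => Z ω * (μ[(fun ω => g0 (U ω, X ω) * h1 (U ω, X ω)) | (MeasurableSpace.comap X inferInstance)]) ω :=
    hterm _ hZsm hZbd _ hP01int hΦ01
  have hT3 : μ[(fun ω => (1 - N ω) * (g1 (U ω, X ω) * h0 (U ω, X ω))) | (MeasurableSpace.comap (fun ω => (Z ω, X ω)) inferInstance)] =ᵐ[μ] fun ω => (1 - N ω) * (μ[(fun ω => g1 (U ω, X ω) * h0 (U ω, X ω)) | (MeasurableSpace.comap X inferInstance)]) ω :=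
    hterm _ h1Nsm h1Nbd _ hP10int hΦ10
  have hT4 : μ[(fun ω => (Z ω * (1 - N ω)) * (g1 (U ω, X ω) * h1 (U ω, X ω))) | (MeasurableSpace.comap (fun ω => (Z ω, X ω)) inferInstance)] =ᵐ[μ] fun ω => (Z ω * (1 - N ω)) * (μ[(fun ω => g1 (U ω, X ω) * h1 (U ω, X ω)) | (MeasurableSpace.comap X inferInstance)]) ω :=
    hterm _ hZ1Nsm hZ1Nbd _ hP11int hΦ11
  have hT5 : μ[(fun ω => Z ω * (g2 (U ω, X ω) * h0 (U ω, X ω))) | (MeasurableSpace.comap (fun ω => (Z ω, X ω)) inferInstance)] =ᵐ[μ] fun ω => Z ω * (μ[(fun ω => g2 (U ω, X ω) * h0 (U ω, X ω)) | (MeasurableSpace.comap X inferInstance)]) ω :=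
    hterm _ hZsm hZbd _ hP20int hΦ20
  have hT6 : μ[(fun ω => Z ω * (g2 (U ω, X ω) * h1 (U ω, X ω))) | (MeasurableSpace.comap (fun ω => (Z ω, X ω)) inferInstance)] =ᵐ[μ] fun ω => Z ω * (μ[(fun ω => g2 (U ω, X ω) * h1 (U ω, X ω)) | (MeasurableSpace.comap X inferInstance)]) ω :=
    hterm _ hZsm hZbd _ hP21int hΦ21
  have hT7 : μ[(fun ω => N ω * g0 (U ω, X ω)) | (MeasurableSpace.comap (fun ω => (Z ω, X ω)) inferInstance)] =ᵐ[μ] fun ω => N ω * (μ[(fun ω => g0 (U ω, X ω)) | (MeasurableSpace.comap X inferInstance)]) ω :=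
    hterm _ hNsm hNbd _ hG0int hΦg0
  have hT8 : μ[(fun ω => (N ω * Z ω) * g2 (U ω, X ω)) | (MeasurableSpace.comap (fun ω => (Z ω, X ω)) inferInstance)] =ᵐ[μ] fun ω => (N ω * Z ω) * (μ[(fun ω => g2 (U ω, X ω)) | (MeasurableSpace.comap X inferInstance)]) ω :=
    hterm _ hNZsm hNZbd _ hG2int hΦg2
  -- assemble: conditional expectation of the sum F
  have hS2 : μ[(fun ω => g0 (U ω, X ω) * h0 (U ω, X ω) + Z ω * (g0 (U ω, X ω) * h1 (U ω, X ω))) | (MeasurableSpace.comap (fun ω => (Z ω, X ω)) inferInstance)] =ᵐ[μ] fun ω => (μ[(fun ω => g0 (U ω, X ω) * h0 (U ω, X ω)) | (MeasurableSpace.comap X inferInstance)]) ω + Z ω * (μ[(fun ω => g0 (U ω, X ω) * h1 (U ω, X ω)) | (MeasurableSpace.comap X inferInstance)]) ω := by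
    have h : μ[(fun ω => g0 (U ω, X ω) * h0 (U ω, X ω) + Z ω * (g0 (U ω, X ω) * h1 (U ω, X ω))) | (MeasurableSpace.comap (fun ω => (Z ω, X ω)) inferInstance)]
        =ᵐ[μ] fun ω => (μ[(fun ω => g0 (U ω, X ω) * h0 (U ω, X ω)) | (MeasurableSpace.comap (fun ω => (Z ω, X ω)) inferInstance)]) ω + (μ[(fun ω => Z ω * (g0 (U ω, X ω) * h1 (U ω, X ω))) | (MeasurableSpace.comap (fun ω => (Z ω, X ω)) inferInstance)]) ω :=
      condExp_add ht1 ht2 _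
    refine h.trans ?_
    filter_upwards [hT1, hT2] with ω u v
    rw [u, v]
  have hS3 : μ[(fun ω => g0 (U ω, X ω) * h0 (U ω, X ω) + Z ω * (g0 (U ω, X ω) * h1 (U ω, X ω)) + (1 - N ω) * (g1 (U ω, X ω) * h0 (U ω, X ω))) | (MeasurableSpace.comap (fun ω => (Z ω, X ω)) inferInstance)] =ᵐ[μ] fun ω => (μ[(fun ω => g0 (U ω, X ω) * h0 (U ω, X ω)) | (MeasurableSpace.comap X inferInstance)]) ω + Z ω * (μ[(fun ω => g0 (U ω, X ω) * h1 (U ω, X ω)) | (MeasurableSpace.comap X inferInstance)]) ω + (1 - N ω) * (μ[(fun ω => g1 (U ω, X ω) * h0 (U ω, X ω)) | (MeasurableSpace.comap X inferInstance)]) ω := by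
    have h : μ[(fun ω => g0 (U ω, X ω) * h0 (U ω, X ω) + Z ω * (g0 (U ω, X ω) * h1 (U ω, X ω)) + (1 - N ω) * (g1 (U ω, X ω) * h0 (U ω, X ω))) | (MeasurableSpace.comap (fun ω => (Z ω, X ω)) inferInstance)]
        =ᵐ[μ] fun ω => (μ[(fun ω => g0 (U ω, X ω) * h0 (U ω, X ω) + Z ω * (g0 (U ω, X ω) * h1 (U ω, X ω))) | (MeasurableSpace.comap (fun ω => (Z ω, X ω)) inferInstance)]) ω + (μ[(fun ω => (1 - N ω) * (g1 (U ω, X ω) * h0 (U ω, X ω))) | (MeasurableSpace.comap (fun ω => (Z ω, X ω)) inferInstance)]) ω :=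
      condExp_add hs2 ht3 _
    refine h.trans ?_
    filter_upwards [hS2, hT3] with ω u v
    rw [u, v]
  have hS4 : μ[(fun ω => g0 (U ω, X ω) * h0 (U ω, X ω) + Z ω * (g0 (U ω, X ω) * h1 (U ω, X ω)) + (1 - N ω) * (g1 (U ω, X ω) * h0 (U ω, X ω)) + (Z ω * (1 - N ω)) * (g1 (U ω, X ω) * h1 (U ω, X ω))) | (MeasurableSpace.comap (fun ω => (Z ω, X ω)) inferInstance)] =ᵐ[μ] fun ω => (μ[(fun ω => g0 (U ω, X ω) * h0 (U ω, X ω)) | (MeasurableSpace.comap X inferInstance)]) ω + Z ω * (μ[(fun ω => g0 (U ω, X ω) * h1 (U ω, X ω)) | (MeasurableSpace.comap X inferInstance)]) ω + (1 - N ω) * (μ[(fun ω => g1 (U ω, X ω) * h0 (U ω, X ω)) | (MeasurableSpace.comap X inferInstance)]) ω + (Z ω * (1 - N ω)) * (μ[(fun ω => g1 (U ω, X ω) * h1 (U ω, X ω)) | (MeasurableSpace.comap X inferInstance)]) ω := by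
    have h : μ[(fun ω => g0 (U ω, X ω) * h0 (U ω, X ω) + Z ω * (g0 (U ω, X ω) * h1 (U ω, X ω)) + (1 - N ω) * (g1 (U ω, X ω) * h0 (U ω, X ω)) + (Z ω * (1 - N ω)) * (g1 (U ω, X ω) * h1 (U ω, X ω))) | (MeasurableSpace.comap (fun ω => (Z ω, X ω)) inferInstance)]
        =ᵐ[μ] fun ω => (μ[(fun ω => g0 (U ω, X ω) * h0 (U ω, X ω) + Z ω * (g0 (U ω, X ω) * h1 (U ω, X ω)) + (1 - N ω) * (g1 (U ω, X ω) * h0 (U ω, X ω))) | (MeasurableSpace.comap (fun ω => (Z ω, X ω)) inferInstance)]) ω + (μ[(fun ω => (Z ω * (1 - N ω)) * (g1 (U ω, X ω) * h1 (U ω, X ω))) | (MeasurableSpace.comap (fun ω => (Z ω, X ω)) inferInstance)]) ω :=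
      condExp_add hs3 ht4 _
    refine h.trans ?_
    filter_upwards [hS3, hT4] with ω u v
    rw [u, v]
  have hS5 : μ[(fun ω => g0 (U ω, X ω) * h0 (U ω, X ω) + Z ω * (g0 (U ω, X ω) * h1 (U ω, X ω)) + (1 - N ω) * (g1 (U ω, X ω) * h0 (U ω, X ω)) + (Z ω * (1 - N ω)) * (g1 (U ω, X ω) * h1 (U ω, X ω)) + Z ω * (g2 (U ω, X ω) * h0 (U ω, X ω))) | (MeasurableSpace.comap (fun ω => (Z ω, X ω)) inferInstance)] =ᵐ[μ] fun ω => (μ[(fun ω => g0 (U ω, X ω) * h0 (U ω, X ω)) | (MeasurableSpace.comap X inferInstance)]) ω + Z ω * (μ[(fun ω => g0 (U ω, X ω) * h1 (U ω, X ω)) | (MeasurableSpace.comap X inferInstance)]) ω + (1 - N ω) * (μ[(fun ω => g1 (U ω, X ω) * h0 (U ω, X ω)) | (MeasurableSpace.comap X inferInstance)]) ω + (Z ω * (1 - N ω)) * (μ[(fun ω => g1 (U ω, X ω) * h1 (U ω, X ω)) | (MeasurableSpace.comap X inferInstance)]) ω + Z ω * (μ[(fun ω => g2 (U ω, X ω)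 * h0 (U ω, X ω)) | (MeasurableSpace.comap X inferInstance)]) ω := by
    have h : μ[(fun ω => g0 (U ω, X ω) * h0 (U ω, X ω) + Z ω * (g0 (U ω, X ω) * h1 (U ω, X ω)) + (1 - N ω) * (g1 (U ω, X ω) * h0 (U ω, X ω)) + (Z ω * (1 - N ω)) * (g1 (U ω, X ω) * h1 (U ω, X ω)) + Z ω * (g2 (U ω, X ω) * h0 (U ω, X ω))) | (MeasurableSpace.comap (fun ω => (Z ω, X ω)) inferInstance)]
        =ᵐ[μ] fun ω => (μ[(fun ω => g0 (U ω, X ω) * h0 (U ω, X ω) + Z ω * (g0 (U ω, X ω) * h1 (U ω, X ω)) + (1 - N ω) * (g1 (U ω, X ω) * h0 (U ω, X ω)) + (Z ω * (1 - N ω)) * (g1 (U ω, X ω) * h1 (U ω, X ω))) | (MeasurableSpace.comap (fun ω => (Z ω, X ω)) inferInstance)]) ω + (μ[(fun ω => Z ω * (g2 (U ω, X ω) * h0 (U ω, X ω))) | (MeasurableSpace.comap (fun ω => (Z ω, X ω)) inferInstance)]) ω :=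
      condExp_add hs4 ht5 _
    refine h.trans ?_
    filter_upwards [hS4, hT5] with ω u v
    rw [u, v]
  have hS6 : μ[(fun ω => g0 (U ω, X ω) * h0 (U ω, X ω) + Z ω * (g0 (U ω, X ω) * h1 (U ω, X ω)) + (1 - N ω) * (g1 (U ω, X ω) * h0 (U ω, X ω)) + (Z ω * (1 - N ω)) * (g1 (U ω, X ω) * h1 (U ω, X ω)) + Z ω * (g2 (U ω, X ω) * h0 (U ω, X ω)) + Z ω * (g2 (U ω, X ω) * h1 (U ω, X ω))) | (MeasurableSpace.comap (fun ω => (Z ω, X ω)) inferInstance)] =ᵐ[μ] fun ω => (μ[(fun ω => g0 (U ω, X ω) * h0 (U ω, X ω)) | (MeasurableSpace.comap X inferInstance)]) ω + Z ω * (μ[(fun ω => g0 (U ω, X ω) * h1 (U ω, X ω)) | (MeasurableSpace.comap X inferInstance)]) ω + (1 - N ω) * (μ[(fun ω => g1 (U ω, X ω) * h0 (U ω, X ω)) | (MeasurableSpace.comap X inferInstance)]) ω + (Z ω * (1 - N ω)) * (μ[(fun ω => g1 (U ω, X ω) * h1 (U ω, X ω)) | (MeasurableSpace.comap X inferInstance)])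 ω + Z ω * (μ[(fun ω => g2 (U ω, X ω) * h0 (U ω, X ω)) | (MeasurableSpace.comap X inferInstance)]) ω + Z ω * (μ[(fun ω => g2 (U ω, X ω) * h1 (U ω, X ω)) | (MeasurableSpace.comap X inferInstance)]) ω := by
    have h : μ[(fun ω => g0 (U ω, X ω) * h0 (U ω, X ω) + Z ω * (g0 (U ω, X ω) * h1 (U ω, X ω)) + (1 - N ω) * (g1 (U ω, X ω) * h0 (U ω, X ω)) + (Z ω * (1 - N ω)) * (g1 (U ω, X ω) * h1 (U ω, X ω)) + Z ω * (g2 (U ω, X ω) * h0 (U ω, X ω)) + Z ω * (g2 (U ω, X ω) * h1 (U ω, X ω))) | (MeasurableSpace.comap (fun ω => (Z ω, X ω)) inferInstance)]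
        =ᵐ[μ] fun ω => (μ[(fun ω => g0 (U ω, X ω) * h0 (U ω, X ω) + Z ω * (g0 (U ω, X ω) * h1 (U ω, X ω)) + (1 - N ω) * (g1 (U ω, X ω) * h0 (U ω, X ω)) + (Z ω * (1 - N ω)) * (g1 (U ω, X ω) * h1 (U ω, X ω)) + Z ω * (g2 (U ω, X ω) * h0 (U ω, X ω))) | (MeasurableSpace.comap (fun ω => (Z ω, X ω)) inferInstance)]) ω + (μ[(fun ω => Z ω * (g2 (U ω, X ω) * h1 (U ω, X ω))) | (MeasurableSpace.comap (fun ω => (Z ω, X ω)) inferInstance)]) ω :=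
      condExp_add hs5 ht6 _
    refine h.trans ?_
    filter_upwards [hS5, hT6] with ω u v
    rw [u, v]
  have hS7 : μ[(fun ω => g0 (U ω, X ω) * h0 (U ω, X ω) + Z ω * (g0 (U ω, X ω) * h1 (U ω, X ω)) + (1 - N ω) * (g1 (U ω, X ω) * h0 (U ω, X ω)) + (Z ω * (1 - N ω)) * (g1 (U ω, X ω) * h1 (U ω, X ω)) + Z ω * (g2 (U ω, X ω) * h0 (U ω, X ω)) + Z ω * (g2 (U ω, X ω) * h1 (U ω, X ω)) - N ω * g0 (U ω, X ω)) | (MeasurableSpace.comap (fun ω => (Z ω, X ω)) inferInstance)] =ᵐ[μ] fun ω => (μ[(fun ω => g0 (U ω, X ω) * h0 (U ω, X ω)) | (MeasurableSpace.comap X inferInstance)]) ω + Z ω * (μ[(fun ω => g0 (U ω, X ω) * h1 (U ω, X ω)) | (MeasurableSpace.comap X inferInstance)]) ω + (1 - N ω) * (μ[(fun ω => g1 (U ω, X ω) * h0 (U ω, X ω)) | (MeasurableSpace.comap X inferInstance)]) ω + (Z ω * (1 - N ω)) * (μ[(fun ω => g1 (U ω, X ω) * h1 (U ω, X ω)) |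 (MeasurableSpace.comap X inferInstance)]) ω + Z ω * (μ[(fun ω => g2 (U ω, X ω) * h0 (U ω, X ω)) | (MeasurableSpace.comap X inferInstance)]) ω + Z ω * (μ[(fun ω => g2 (U ω, X ω) * h1 (U ω, X ω)) | (MeasurableSpace.comap X inferInstance)]) ω - N ω * (μ[(fun ω => g0 (U ω, X ω)) | (MeasurableSpace.comap X inferInstance)]) ω := by
    have h : μ[(fun ω => g0 (U ω, X ω) * h0 (U ω, X ω) + Z ω * (g0 (U ω, X ω) * h1 (U ω, X ω)) + (1 - N ω) * (g1 (U ω, X ω) * h0 (U ω, X ω)) + (Z ω * (1 - N ω)) * (g1 (U ω, X ω) * h1 (U ω, X ω)) + Z ω * (g2 (U ω, X ω) * h0 (U ω, X ω)) + Z ω * (g2 (U ω, X ω) * h1 (U ω, X ω)) - N ω * g0 (U ω, X ω)) | (MeasurableSpace.comap (fun ω => (Z ω, X ω)) inferInstance)]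
        =ᵐ[μ] fun ω => (μ[(fun ω => g0 (U ω, X ω) * h0 (U ω, X ω) + Z ω * (g0 (U ω, X ω) * h1 (U ω, X ω)) + (1 - N ω) * (g1 (U ω, X ω) * h0 (U ω, X ω)) + (Z ω * (1 - N ω)) * (g1 (U ω, X ω) * h1 (U ω, X ω)) + Z ω * (g2 (U ω, X ω) * h0 (U ω, X ω)) + Z ω * (g2 (U ω, X ω) * h1 (U ω, X ω))) | (MeasurableSpace.comap (fun ω => (Z ω, X ω)) inferInstance)]) ω - (μ[(fun ω => N ω * g0 (U ω, X ω)) | (MeasurableSpace.comap (fun ω => (Z ω, X ω)) inferInstance)]) ω :=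
      condExp_sub hs6 ht7 _
    refine h.trans ?_
    filter_upwards [hS6, hT7] with ω u v
    rw [u, v]
  have hS8 : μ[(fun ω => g0 (U ω, X ω) * h0 (U ω, X ω) + Z ω * (g0 (U ω, X ω) * h1 (U ω, X ω)) + (1 - N ω) * (g1 (U ω, X ω) * h0 (U ω, X ω)) + (Z ω * (1 - N ω)) * (g1 (U ω, X ω) * h1 (U ω, X ω)) + Z ω * (g2 (U ω, X ω) * h0 (U ω, X ω)) + Z ω * (g2 (U ω, X ω) * h1 (U ω, X ω)) - N ω * g0 (U ω, X ω) - (N ω * Z ω) * g2 (U ω, X ω)) | (MeasurableSpace.comap (fun ω => (Z ω, X ω)) inferInstance)] =ᵐ[μ] fun ω => (μ[(fun ω => g0 (U ω, X ω) * h0 (U ω, X ω)) | (MeasurableSpace.comap X inferInstance)]) ω + Z ω * (μ[(fun ω => g0 (U ω, X ω) * h1 (U ω, X ω)) | (MeasurableSpace.comap X inferInstance)]) ω + (1 - N ω) * (μ[(fun ω => g1 (U ω, X ω) * h0 (U ω, X ω)) | (MeasurableSpace.comap X inferInstance)]) ω + (Z ω * (1 - N ω)) * (μ[(fun ω => g1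 (U ω, X ω) * h1 (U ω, X ω)) | (MeasurableSpace.comap X inferInstance)]) ω + Z ω * (μ[(fun ω => g2 (U ω, X ω) * h0 (U ω, X ω)) | (MeasurableSpace.comap X inferInstance)]) ω + Z ω * (μ[(fun ω => g2 (U ω, X ω) * h1 (U ω, X ω)) | (MeasurableSpace.comap X inferInstance)]) ω - N ω * (μ[(fun ω => g0 (U ω, X ω)) | (MeasurableSpace.comap X inferInstance)]) ω - (N ω * Z ω) * (μ[(fun ω => g2 (U ω, X ω)) | (MeasurableSpace.comap X inferInstance)]) ω := by
    have h : μ[(fun ω => g0 (U ω, X ω) * h0 (U ω, X ω) + Z ω * (g0 (U ω, X ω) * h1 (U ω, X ω)) + (1 - N ω) * (g1 (U ω, X ω) * h0 (U ω, X ω)) + (Z ω * (1 - N ω)) * (g1 (U ω, X ω) * h1 (U ω, X ω)) + Z ω * (g2 (U ω, X ω) * h0 (U ω, X ω)) + Z ω * (g2 (U ω, X ω) * h1 (U ω, X ω)) - N ω * g0 (U ω, X ω) - (N ω * Z ω) * g2 (U ω, X ω)) | (MeasurableSpace.comap (fun ω => (Z ω, X ω)) inferInstance)]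
        =ᵐ[μ] fun ω => (μ[(fun ω => g0 (U ω, X ω) * h0 (U ω, X ω) + Z ω * (g0 (U ω, X ω) * h1 (U ω, X ω)) + (1 - N ω) * (g1 (U ω, X ω) * h0 (U ω, X ω)) + (Z ω * (1 - N ω)) * (g1 (U ω, X ω) * h1 (U ω, X ω)) + Z ω * (g2 (U ω, X ω) * h0 (U ω, X ω)) + Z ω * (g2 (U ω, X ω) * h1 (U ω, X ω)) - N ω * g0 (U ω, X ω)) | (MeasurableSpace.comap (fun ω => (Z ω, X ω)) inferInstance)]) ω - (μ[(fun ω => (N ω * Z ω) * g2 (U ω, X ω)) | (MeasurableSpace.comap (fun ω => (Z ω, X ω)) inferInstance)]) ω :=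
      condExp_sub hs7 ht8 _
    refine h.trans ?_
    filter_upwards [hS7, hT8] with ω u v
    rw [u, v]
  -- representation of N via conditional expectations of h0, h1
  have hZh1int : Integrable (fun ω => Z ω * h1 (U ω, X ω)) μ :=
    Integrable.bdd_mul (c := 1) hH1int hZm.aestronglyMeasurable hZbd
  have hνrep : N =ᵐ[μ] fun ω => (μ[(fun ω => h0 (U ω, X ω)) | (MeasurableSpace.comap X inferInstance)]) ω + Z ω * (μ[(fun ω => h1 (U ω, X ω)) | (MeasurableSpace.comap X inferInstance)]) ω := by
    have t0 : N =ᵐ[μ] μ[A | (MeasurableSpace.comap (fun ω => (Z ω, X ω)) inferInstance)] := (hμ0.trans hNμ0).symm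
    have t1 : μ[A | (MeasurableSpace.comap (fun ω => (Z ω, X ω)) inferInstance)] =ᵐ[μ] μ[(fun ω => h0 (U ω, X ω) + Z ω * h1 (U ω, X ω)) | (MeasurableSpace.comap (fun ω => (Z ω, X ω)) inferInstance)] := by
      refine (condExp_condExp_of_le hZXZUX hZUXle).symm.trans (condExp_congr_ae (hA10A.trans ?_))
      exact Filter.Eventually.of_forall fun ω => by ring
    have t2 : μ[(fun ω => h0 (U ω, X ω) + Z ω * h1 (U ω, X ω)) | (MeasurableSpace.comap (fun ω => (Z ω, X ω)) inferInstance)]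
        =ᵐ[μ] fun ω => (μ[(fun ω => h0 (U ω, X ω)) | (MeasurableSpace.comap (fun ω => (Z ω, X ω)) inferInstance)]) ω + (μ[(fun ω => Z ω * h1 (U ω, X ω)) | (MeasurableSpace.comap (fun ω => (Z ω, X ω)) inferInstance)]) ω :=
      condExp_add hH0int hZh1int _
    have t3 := hkey (fun ω => h0 (U ω, X ω)) hH0int hΦh0
    have t4 := hterm Z hZsm hZbd (fun ω => h1 (U ω, X ω)) hH1int hΦh1
    refine ((t0.trans t1).trans t2).trans ?_
    filter_upwards [t3, t4] with ω u v
    rw [u, v]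
  -- step 1: replace μ0 by its truncation N in the conditioned variable
  have hANint : Integrable (fun ω => (A ω - N ω) * Y ω) μ :=
    hwint.congr (by filter_upwards [hNμ0] with ω h; rw [h])
  have step0 : μ[(fun ω => (A ω - μ0 (Z ω, X ω)) * Y ω) | (MeasurableSpace.comap (fun ω => (Z ω, X ω)) inferInstance)]
      =ᵐ[μ] μ[(fun ω => (A ω - N ω) * Y ω) | (MeasurableSpace.comap (fun ω => (Z ω, X ω)) inferInstance)] :=
    condExp_congr_ae (by filter_upwards [hNμ0] with ω h; rw [h])
  -- step 2: condition on σ(A,Z,U,X) and use the outcome model (A10)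
  have hANsm : StronglyMeasurable[(MeasurableSpace.comap (fun ω => (A ω, Z ω, U ω, X ω)) inferInstance)] (fun ω => A ω - N ω) := by
    have hA' : Measurable[(MeasurableSpace.comap (fun ω => (A ω, Z ω, U ω, X ω)) inferInstance)] A := measurable_fst.comp hpairA
    have hZX' : Measurable[(MeasurableSpace.comap (fun ω => (A ω, Z ω, U ω, X ω)) inferInstance)] (fun ω => (Z ω, X ω)) :=
      (measurable_fst.comp (measurable_snd.comp hpairA)).prodMk
        (measurable_snd.comp (measurable_snd.comp (measurable_snd.comp hpairA)))
    exact (hA'.sub (hνm.comp hZX')).stronglyMeasurable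
  have hE2 : μ[(fun ω => (A ω - N ω) * Y ω) | (MeasurableSpace.comap (fun ω => (A ω, Z ω, U ω, X ω)) inferInstance)] =ᵐ[μ] (fun ω => (A ω - N ω) * (g0 (U ω, X ω) + g1 (U ω, X ω) * A ω + g2 (U ω, X ω) * Z ω)) := by
    have h1 : μ[(fun ω => (A ω - N ω) * Y ω) | (MeasurableSpace.comap (fun ω => (A ω, Z ω, U ω, X ω)) inferInstance)] =ᵐ[μ] fun ω => (A ω - N ω) * (μ[Y | (MeasurableSpace.comap (fun ω => (A ω, Z ω, U ω, X ω)) inferInstance)]) ω :=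
      condExp_mul_of_stronglyMeasurable_left hANsm hANint hYint
    refine h1.trans ?_
    filter_upwards [hA10Y] with ω h
    rw [h]
  have hE3 : (fun ω => (A ω - N ω) * (g0 (U ω, X ω) + g1 (U ω, X ω) * A ω + g2 (U ω, X ω) * Z ω)) = (fun ω => -(N ω) * (g0 (U ω, X ω) + g2 (U ω, X ω) * Z ω) + (g0 (U ω, X ω) + (1 - N ω) * g1 (U ω, X ω) + g2 (U ω, X ω) * Z ω) * A ω) := by
    funext ω; rcases hAbin ω with h | h <;> rw [h] <;> ring
  have step1 : μ[(fun ω => (A ω - N ω) * Y ω) | (MeasurableSpace.comap (fun ω => (Z ω, X ω)) inferInstance)] =ᵐ[μ] μ[(fun ω => -(N ω) * (g0 (U ω, X ω) + g2 (U ω, X ω) * Z ω) + (g0 (U ω, X ω) + (1 - N ω) * g1 (U ω, X ω) + g2 (U ω, X ω) * Z ω) * A ω) | (MeasurableSpace.comap (fun ω => (Z ω, X ω)) inferInstance)] := by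
    have htower : μ[(fun ω => (A ω - N ω) * Y ω) | (MeasurableSpace.comap (fun ω => (Z ω, X ω)) inferInstance)] =ᵐ[μ] μ[μ[(fun ω => (A ω - N ω) * Y ω) | (MeasurableSpace.comap (fun ω => (A ω, Z ω, U ω, X ω)) inferInstance)] | (MeasurableSpace.comap (fun ω => (Z ω, X ω)) inferInstance)] :=
      (condExp_condExp_of_le hZXAZUX hAZUXle).symm
    refine htower.trans (condExp_congr_ae ?_)
    rw [← hE3]
    exact hE2
  -- step 3: condition on σ(Z,U,X) and use the treatment model (A10)
  have hG2Zint : Integrable (fun ω => g2 (U ω, X ω) * Z ω) μ :=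
    Stmt3Aux.int_mul_bdd hG2int hZm.aestronglyMeasurable hZbd
  have h1NG1int : Integrable (fun ω => (1 - N ω) * g1 (U ω, X ω)) μ :=
    Integrable.bdd_mul (c := 1) hG1int h1Naesm h1Nbd
  have hCint : Integrable (fun ω => -(N ω) * (g0 (U ω, X ω) + g2 (U ω, X ω) * Z ω)) μ := by
    refine Integrable.bdd_mul (c := 1) (hG0int.add hG2Zint) hNaesm.neg ?_
    filter_upwards [hNbd] with ω h
    simpa using h
  have hDint : Integrable (fun ω => (g0 (U ω, X ω) + (1 - N ω) * g1 (U ω, X ω) + g2 (U ω, X ω) * Z ω)) μ := (hG0int.add h1NG1int).add hG2Zint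
  have hDAint : Integrable (fun ω => (g0 (U ω, X ω) + (1 - N ω) * g1 (U ω, X ω) + g2 (U ω, X ω) * Z ω) * A ω) μ :=
    Stmt3Aux.int_mul_bdd hDint hAm.aestronglyMeasurable hAbd
  have hUX' : Measurable[(MeasurableSpace.comap (fun ω => (Z ω, U ω, X ω)) inferInstance)] (fun ω => (U ω, X ω)) :=
    (measurable_fst.comp (measurable_snd.comp hpairZUX)).prodMk
      (measurable_snd.comp (measurable_snd.comp hpairZUX))
  have hZ' : Measurable[(MeasurableSpace.comap (fun ω => (Z ω, U ω, X ω)) inferInstance)] Z := measurable_fst.comp hpairZUX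
  have hN' : Measurable[(MeasurableSpace.comap (fun ω => (Z ω, U ω, X ω)) inferInstance)] N := by
    have hZX'' : Measurable[(MeasurableSpace.comap (fun ω => (Z ω, U ω, X ω)) inferInstance)] (fun ω => (Z ω, X ω)) :=
      hZ'.prodMk (measurable_snd.comp (measurable_snd.comp hpairZUX))
    exact hνm.comp hZX''
  have hCsm : StronglyMeasurable[(MeasurableSpace.comap (fun ω => (Z ω, U ω, X ω)) inferInstance)] (fun ω => -(N ω) * (g0 (U ω, X ω) + g2 (U ω, X ω) * Z ω)) :=
    (hN'.neg.mul ((hg0.comp hUX').add ((hg2.comp hUX').mul hZ'))).stronglyMeasurable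
  have hDsm : StronglyMeasurable[(MeasurableSpace.comap (fun ω => (Z ω, U ω, X ω)) inferInstance)] (fun ω => (g0 (U ω, X ω) + (1 - N ω) * g1 (U ω, X ω) + g2 (U ω, X ω) * Z ω)) :=
    (((hg0.comp hUX').add ((measurable_const.sub hN').mul (hg1.comp hUX'))).add
      ((hg2.comp hUX').mul hZ')).stronglyMeasurable
  have hE4 : μ[(fun ω => -(N ω) * (g0 (U ω, X ω) + g2 (U ω, X ω) * Z ω) + (g0 (U ω, X ω) + (1 - N ω) * g1 (U ω, X ω) + g2 (U ω, X ω) * Z ω) * A ω) | (MeasurableSpace.comap (fun ω => (Z ω, U ω, X ω)) inferInstance)] =ᵐ[μ] (fun ω => -(N ω) * (g0 (U ω, X ω) + g2 (U ω, X ω) * Z ω) + (g0 (U ω, X ω) + (1 - N ω) * g1 (U ω, X ω) + g2 (U ω, X ω) * Z ω) * (h0 (U ω, X ω) + h1 (U ω, X ω) * Z ω)) := by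
    have h1 : μ[(fun ω => -(N ω) * (g0 (U ω, X ω) + g2 (U ω, X ω) * Z ω) + (g0 (U ω, X ω) + (1 - N ω) * g1 (U ω, X ω) + g2 (U ω, X ω) * Z ω) * A ω) | (MeasurableSpace.comap (fun ω => (Z ω, U ω, X ω)) inferInstance)]
        =ᵐ[μ] fun ω => (μ[(fun ω => -(N ω) * (g0 (U ω, X ω) + g2 (U ω, X ω) * Z ω)) | (MeasurableSpace.comap (fun ω => (Z ω, U ω, X ω)) inferInstance)]) ω + (μ[(fun ω => (g0 (U ω, X ω) + (1 - N ω) * g1 (U ω, X ω) + g2 (U ω, X ω) * Z ω) * A ω) | (MeasurableSpace.comap (fun ω => (Z ω, U ω, X ω)) inferInstance)]) ω :=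
      condExp_add hCint hDAint _
    have h2 : μ[(fun ω => -(N ω) * (g0 (U ω, X ω) + g2 (U ω, X ω) * Z ω)) | (MeasurableSpace.comap (fun ω => (Z ω, U ω, X ω)) inferInstance)] = fun ω => -(N ω) * (g0 (U ω, X ω) + g2 (U ω, X ω) * Z ω) :=
      condExp_of_stronglyMeasurable hZUXle hCsm hCint
    have h3 : μ[(fun ω => (g0 (U ω, X ω) + (1 - N ω) * g1 (U ω, X ω) + g2 (U ω, X ω) * Z ω) * A ω) | (MeasurableSpace.comap (fun ω => (Z ω, U ω, X ω)) inferInstance)]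
        =ᵐ[μ] fun ω => (g0 (U ω, X ω) + (1 - N ω) * g1 (U ω, X ω) + g2 (U ω, X ω) * Z ω) * (μ[A | (MeasurableSpace.comap (fun ω => (Z ω, U ω, X ω)) inferInstance)]) ω :=
      condExp_mul_of_stronglyMeasurable_left hDsm hDAint hAint
    refine h1.trans ?_
    filter_upwards [h3, hA10A] with ω h3 h4
    rw [h2, h3, h4]
  have hE5 : (fun ω => -(N ω) * (g0 (U ω, X ω) + g2 (U ω, X ω) * Z ω) + (g0 (U ω, X ω) + (1 - N ω) * g1 (U ω, X ω) + g2 (U ω, X ω) * Z ω) * (h0 (U ω, X ω) + h1 (U ω, X ω) * Z ω)) = (fun ω => g0 (U ω, X ω) * h0 (U ω, X ω) + Z ω * (g0 (U ω, X ω) * h1 (U ω, X ω)) + (1 - N ω) * (g1 (U ω, X ω) * h0 (U ω, X ω)) + (Z ω * (1 - N ω)) * (g1 (U ω, X ω) * h1 (U ω, X ω)) + Z ω * (g2 (U ω, X ω) * h0 (U ω, X ω)) + Z ω * (g2 (U ω, X ω) * h1 (U ω, X ω)) - N ω * g0 (U ω, X ω) - (N ω * Z ω) * g2 (U ω, X ω))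 := by
    funext ω; rcases hZbin ω with h | h <;> rw [h] <;> ring
  have step2 : μ[(fun ω => -(N ω) * (g0 (U ω, X ω) + g2 (U ω, X ω) * Z ω) + (g0 (U ω, X ω) + (1 - N ω) * g1 (U ω, X ω) + g2 (U ω, X ω) * Z ω) * A ω) | (MeasurableSpace.comap (fun ω => (Z ω, X ω)) inferInstance)] =ᵐ[μ] μ[(fun ω => g0 (U ω, X ω) * h0 (U ω, X ω) + Z ω * (g0 (U ω, X ω) * h1 (U ω, X ω)) + (1 - N ω) * (g1 (U ω, X ω) * h0 (U ω, X ω)) + (Z ω * (1 - N ω)) * (g1 (U ω, X ω) * h1 (U ω, X ω)) + Z ω * (g2 (U ω, X ω) * h0 (U ω, X ω)) + Z ω * (g2 (U ω, X ω) * h1 (U ω, X ω)) - N ω * g0 (U ω, X ω) - (N ω * Z ω) * g2 (U ω, X ω)) | (MeasurableSpace.comap (fun ω => (Z ω, X ω)) inferInstance)] := by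
    have htower : μ[(fun ω => -(N ω) * (g0 (U ω, X ω) + g2 (U ω, X ω) * Z ω) + (g0 (U ω, X ω) + (1 - N ω) * g1 (U ω, X ω) + g2 (U ω, X ω) * Z ω) * A ω) | (MeasurableSpace.comap (fun ω => (Z ω, X ω)) inferInstance)] =ᵐ[μ] μ[μ[(fun ω => -(N ω) * (g0 (U ω, X ω) + g2 (U ω, X ω) * Z ω) + (g0 (U ω, X ω) + (1 - N ω) * g1 (U ω, X ω) + g2 (U ω, X ω) * Z ω) * A ω) | (MeasurableSpace.comap (fun ω => (Z ω, U ω, X ω)) inferInstance)] | (MeasurableSpace.comap (fun ω => (Z ω, X ω)) inferInstance)] :=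
      (condExp_condExp_of_le hZXZUX hZUXle).symm
    refine htower.trans (condExp_congr_ae ?_)
    rw [← hE5]
    exact hE4
  -- combine all the steps and finish with pointwise algebra
  refine ((step0.trans step1).trans (step2.trans hS8)).trans ?_
  filter_upwards [hδ0, hc00, hc10, hc20, hc01, hc11, hc21, hνrep, hNμ0]
    with ω hδ hc00 hc10 hc20 hc01 hc11 hc21 hν hNμ
  rw [hc00, hc10, hc20, hc01, hc11, hc21, hNμ, ← hδ, hν]
  rcases hZbin ω with hz | hz <;> rw [hz] <;> ring
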